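/- Let x, y be real numbers with 0 < y ≤ x and x + y < 1. For each positive integer N set s_N = ⌊yN⌋, q_N = ⌊xN⌋ − ⌊yN⌋, r_N = N − ⌊xN⌋. Then the limit lim_{N→∞} −(1/N²) · log( ∏_{j=0}^{s_N−1} j! · (j+q_N)! · (j+q_N+r_N)! / ( (r_N−j−1)! · (2j+q_N)! · (2j+q_N+1)! ) ) exists and equals ψ(x,y) = ((x+y)²/2) log(x+y) − ((1−x−y)²/2) log(1−x−y) − (x²/2) log x + ((1−x)²/2) log(1−x) − (y²/2) log y + ((1−y)²/2) log(1−y). -/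

import Mathlib

open Finset Filter Real
open Topology

noncomputable def LF (m : ℕ) : ℝ := ∑ j ∈ Finset.range m, Real.log (Nat.factorial j)

lemma h_add_one_atTop : Tendsto (fun n : ℕ => (n:ℝ) + 1) atTop atTop :=
  tendsto_atTop_add_const_right _ 1 tendsto_natCast_atTop_atTop

lemma h_inv_lim : Tendsto (fun n : ℕ => 1 / ((n:ℝ) + 1)) atTop (𝓝 0) :=
  tendsto_one_div_add_atTop_nhds_zero_nat

lemma h_ratio_lim : Tendsto (fun n : ℕ => (n:ℝ) / ((n:ℝ) + 1)) atTop (𝓝 1) := by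
  have h : ∀ n : ℕ, (n:ℝ) / ((n:ℝ) + 1) = 1 - 1 / ((n:ℝ) + 1) := by
    intro n
    have : ((n:ℝ) + 1) ≠ 0 := by positivity
    field_simp
    ring
  simp only [h]
  simpa using tendsto_const_nhds.sub h_inv_lim

lemma h_logdiv : Tendsto (fun n : ℕ => Real.log n / ((n:ℝ) + 1)) atTop (𝓝 0) := by
  have h1 : Tendsto (fun n : ℕ => Real.log n / (n:ℝ)) atTop (𝓝 0) :=
    (Real.isLittleO_log_id_atTop.tendsto_div_nhds_zero).comp tendsto_natCast_atTop_atTop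
  have h2 := h1.mul h_ratio_lim
  rw [mul_one] at h2
  apply h2.congr'
  filter_upwards [eventually_ge_atTop 1] with n hn
  have hn' : (0:ℝ) < (n:ℝ) := by exact_mod_cast hn
  field_simp

lemma eps_lim : Tendsto (fun n : ℕ =>
    (Real.log (Nat.factorial n) - ((n:ℝ) * Real.log n - (n:ℝ))) / ((n:ℝ) + 1)) atTop (𝓝 0) := by
  have hst : Tendsto (fun n : ℕ => Real.log (Stirling.stirlingSeq n)) atTop
      (𝓝 (Real.log (Real.sqrt Real.pi))) :=
    Stirling.tendsto_stirlingSeq_sqrt_pi.log (by positivity)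
  have h1 : Tendsto (fun n : ℕ => Real.log (Stirling.stirlingSeq n) / ((n:ℝ) + 1)) atTop (𝓝 0) :=
    hst.div_atTop h_add_one_atTop
  have h3 : Tendsto (fun n : ℕ => Real.log 2 / ((n:ℝ) + 1)) atTop (𝓝 0) :=
    tendsto_const_nhds.div_atTop h_add_one_atTop
  have h2 : Tendsto (fun n : ℕ =>
      Real.log (Stirling.stirlingSeq n) / ((n:ℝ) + 1)
        + (1/2) * (Real.log 2 / ((n:ℝ)+1) + Real.log n / ((n:ℝ)+1))) atTop (𝓝 0) := by
    simpa using h1.add ((h3.add h_logdiv).const_mul (1/2 : ℝ))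
  apply h2.congr'
  filter_upwards [eventually_ge_atTop 1] with n hn
  have hn0 : (n:ℝ) ≠ 0 := by
    have : (0:ℝ) < (n:ℝ) := by exact_mod_cast hn
    positivity
  have hf := Stirling.log_stirlingSeq_formula n
  have hlog2n : Real.log (2 * (n:ℝ)) = Real.log 2 + Real.log n :=
    Real.log_mul two_ne_zero hn0
  have hlogne : Real.log ((n:ℝ) / Real.exp 1) = Real.log n - 1 := by
    rw [Real.log_div hn0 (Real.exp_ne_zero 1), Real.log_exp]
  rw [hlog2n, hlogne] at hf
  have key : Real.log (Nat.factorial n) - ((n:ℝ) * Real.log n - (n:ℝ))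
      = Real.log (Stirling.stirlingSeq n) + (1/2) * (Real.log 2 + Real.log n) := by
    rw [hf]; ring
  rw [key]; ring

lemma onelog_lim : Tendsto (fun n : ℕ => ((n:ℝ) + 1) * Real.log (1 + 1/(n:ℝ))) atTop (𝓝 1) := by
  have hpow : Tendsto (fun n : ℕ => (1 + 1/(n:ℝ)) ^ n) atTop (𝓝 (Real.exp 1)) := by
    simpa using Real.tendsto_one_add_div_pow_exp 1
  have hlogpow : Tendsto (fun n : ℕ => (n:ℝ) * Real.log (1 + 1/(n:ℝ))) atTop (𝓝 1) := by
    have := (hpow.log (Real.exp_ne_zero 1))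
    simp only [Real.log_pow, Real.log_exp] at this
    exact this
  have hlog0 : Tendsto (fun n : ℕ => Real.log (1 + 1/(n:ℝ))) atTop (𝓝 0) := by
    have h1 : Tendsto (fun n : ℕ => 1 + 1/(n:ℝ)) atTop (𝓝 1) := by
      simpa using (tendsto_const_nhds (x := (1:ℝ))).add
        (tendsto_one_div_atTop_nhds_zero_nat)
    simpa using h1.log one_ne_zero
  have := hlogpow.add hlog0
  rw [add_zero] at this
  apply this.congr
  intro n
  ring

lemma D_lim : Tendsto (fun m : ℕ =>
    (Real.log (Nat.factorial m)
      - (((m:ℝ)+1)^2/2 * Real.log ((m:ℝ)+1) - (m:ℝ)^2/2 * Real.log m)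
      + 3*(2*(m:ℝ)+1)/4) / ((m:ℝ)+1)) atTop (𝓝 0) := by
  have hcomb : Tendsto (fun m : ℕ =>
      (Real.log (Nat.factorial m) - ((m:ℝ) * Real.log m - (m:ℝ))) / ((m:ℝ)+1)
      - (1/2) * (Real.log m / ((m:ℝ)+1))
      - (1/2) * (((m:ℝ)+1) * Real.log (1 + 1/(m:ℝ)))
      + (1/2) * ((m:ℝ) / ((m:ℝ)+1))
      + (3/4) * (1 / ((m:ℝ)+1))) atTop (𝓝 0) := by
    have := ((((eps_lim.sub (h_logdiv.const_mul (1/2:ℝ))).sub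
      (onelog_lim.const_mul (1/2:ℝ))).add
      (h_ratio_lim.const_mul (1/2:ℝ))).add (h_inv_lim.const_mul (3/4:ℝ)))
    norm_num at this ⊢
    exact this

  apply hcomb.congr'
  filter_upwards [eventually_ge_atTop 1] with m hm
  have hm0 : (0:ℝ) < (m:ℝ) := by exact_mod_cast hm
  have hm0' : (m:ℝ) ≠ 0 := ne_of_gt hm0
  have hℓ : Real.log ((m:ℝ) + 1) = Real.log (1 + 1/(m:ℝ)) + Real.log m := by
    rw [← Real.log_mul (by positivity) hm0']
    congr 1
    field_simp
  rw [hℓ]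
  have hm1 : ((m:ℝ) + 1) ≠ 0 := by positivity
  field_simp
  ring

noncomputable def AA (m : ℕ) : ℝ :=
  LF m - (m:ℝ)^2/2 * Real.log m + 3*(m:ℝ)^2/4

lemma AA_zero : AA 0 = 0 := by
  simp [AA, LF]

lemma AA_diff (k : ℕ) : AA (k+1) - AA k
    = Real.log (Nat.factorial k)
      - (((k:ℝ)+1)^2/2 * Real.log ((k:ℝ)+1) - (k:ℝ)^2/2 * Real.log k)
      + 3*(2*(k:ℝ)+1)/4 := by
  have hLF : LF (k+1) - LF k = Real.log (Nat.factorial k) := by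
    rw [LF, LF, Finset.sum_range_succ]; ring
  rw [AA, AA]
  push_cast
  have : LF (k + 1) = LF k + Real.log (Nat.factorial k) := by linarith
  rw [this]
  ring

lemma A_lim : Tendsto (fun m : ℕ => AA m / (m:ℝ)^2) atTop (𝓝 0) := by
  set u : ℕ → ℝ := fun k => |(Real.log (Nat.factorial k)
      - (((k:ℝ)+1)^2/2 * Real.log ((k:ℝ)+1) - (k:ℝ)^2/2 * Real.log k)
      + 3*(2*(k:ℝ)+1)/4) / ((k:ℝ)+1)| with hu
  have hu0 : Tendsto u atTop (𝓝 0) := by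
    have := D_lim.abs
    simpa using this
  have hces : Tendsto (fun n : ℕ => (∑ i ∈ Finset.range n, u i) / n) atTop (𝓝 0) :=
    hu0.cesaro.congr (fun n => inv_mul_eq_div _ _)
  have habs : Tendsto (fun m : ℕ => |AA m / (m:ℝ)^2|) atTop (𝓝 0) := by
    apply squeeze_zero (fun m => abs_nonneg _) _ hces
    intro m
    rcases Nat.eq_zero_or_pos m with hm | hm
    · subst hm; simp [AA_zero]
    · have hAm : AA m = ∑ k ∈ Finset.range m, (AA (k+1) - AA k) := by
        rw [Finset.sum_range_sub AA m, AA_zero, sub_zero]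
      have hmR : (0:ℝ) < (m:ℝ) := by exact_mod_cast hm
      have hbound : |AA m| ≤ ∑ k ∈ Finset.range m, u k * (m:ℝ) := by
        rw [hAm]
        refine (Finset.abs_sum_le_sum_abs _ _).trans (Finset.sum_le_sum fun k hk => ?_)
        rw [AA_diff k]
        rw [Finset.mem_range] at hk
        have hk1 : (0:ℝ) < (k:ℝ)+1 := by positivity
        have hkm : (k:ℝ)+1 ≤ (m:ℝ) := by exact_mod_cast hk
        have heq : u k * ((k:ℝ)+1) = |(Real.log (Nat.factorial k)
            - (((k:ℝ)+1)^2/2 * Real.log ((k:ℝ)+1) - (k:ℝ)^2/2 * Real.log k)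
            + 3*(2*(k:ℝ)+1)/4)| := by
          simp only [hu]
          rw [abs_div, abs_of_pos hk1]
          field_simp
        rw [← heq]
        exact mul_le_mul_of_nonneg_left hkm (abs_nonneg _)
      rw [← Finset.sum_mul] at hbound
      rw [abs_div, abs_of_nonneg (by positivity : (0:ℝ) ≤ (m:ℝ)^2)]
      rw [div_le_div_iff₀ (by positivity) hmR]
      calc |AA m| * (m:ℝ) ≤ ((∑ k ∈ Finset.range m, u k) * (m:ℝ)) * (m:ℝ) :=
            mul_le_mul_of_nonneg_right hbound (le_of_lt hmR)
        _ = (∑ k ∈ Finset.range m, u k) * (m:ℝ)^2 := by ring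
  exact (tendsto_zero_iff_abs_tendsto_zero _).mpr habs

lemma key_lim (m : ℕ → ℕ) (c : ℝ) (hc : 0 < c)
    (hm : Tendsto (fun N : ℕ => (m N : ℝ) / (N:ℝ)) atTop (𝓝 c)) :
    Tendsto (fun N : ℕ => (LF (m N) - (m N : ℝ)^2/2 * Real.log N) / (N:ℝ)^2) atTop
      (𝓝 (c^2/2 * Real.log c - 3*c^2/4)) := by
  have hmc : Tendsto (fun N : ℕ => (m N : ℝ)) atTop atTop := by
    have h1 : Tendsto (fun N : ℕ => ((m N : ℝ)/(N:ℝ)) * (N:ℝ)) atTop atTop :=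
      hm.pos_mul_atTop hc tendsto_natCast_atTop_atTop
    apply h1.congr'
    filter_upwards [eventually_ge_atTop 1] with N hN
    have : (N:ℝ) ≠ 0 := by
      have : (0:ℝ) < (N:ℝ) := by exact_mod_cast hN
      positivity
    field_simp
  have hmtop : Tendsto m atTop atTop := tendsto_natCast_atTop_iff.mp hmc
  have hA : Tendsto (fun N : ℕ => AA (m N) / (m N : ℝ)^2) atTop (𝓝 0) := A_lim.comp hmtop
  have hr2 : Tendsto (fun N : ℕ => ((m N : ℝ)/(N:ℝ))^2) atTop (𝓝 (c^2)) := hm.pow 2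
  have hlogr : Tendsto (fun N : ℕ => Real.log ((m N : ℝ)/(N:ℝ))) atTop (𝓝 (Real.log c)) :=
    hm.log (ne_of_gt hc)
  have hcomb : Tendsto (fun N : ℕ =>
      (AA (m N) / (m N : ℝ)^2) * ((m N : ℝ)/(N:ℝ))^2
        + ((m N : ℝ)/(N:ℝ))^2 / 2 * Real.log ((m N : ℝ)/(N:ℝ))
        - 3 * ((m N : ℝ)/(N:ℝ))^2 / 4) atTop
      (𝓝 (0 * c^2 + c^2/2 * Real.log c - 3*c^2/4)) := by
    exact ((hA.mul hr2).add ((hr2.div_const 2).mul hlogr)).sub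
      ((hr2.const_mul 3).div_const 4)
  rw [zero_mul, zero_add] at hcomb
  apply hcomb.congr'
  filter_upwards [eventually_ge_atTop 1, hmtop.eventually_ge_atTop 1] with N hN hmN
  have hN0 : (0:ℝ) < (N:ℝ) := by exact_mod_cast hN
  have hm0 : (0:ℝ) < (m N : ℝ) := by exact_mod_cast hmN
  have hlogdiv : Real.log ((m N : ℝ)/(N:ℝ)) = Real.log (m N) - Real.log N :=
    Real.log_div (ne_of_gt hm0) (ne_of_gt hN0)
  have hLF : LF (m N) = AA (m N) + (m N : ℝ)^2/2 * Real.log (m N) - 3*(m N : ℝ)^2/4 := by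
    rw [AA]; ring
  rw [hlogdiv, hLF]
  field_simp
  ring
lemma pair_sum (g : ℕ → ℝ) (s : ℕ) :
    ∑ k ∈ Finset.range (2 * s), g k = ∑ j ∈ Finset.range s, (g (2 * j) + g (2 * j + 1)) := by
  induction s with
  | zero => simp
  | succ n ih =>
      have h2 : 2 * (n + 1) = 2 * n + 1 + 1 := by omega
      rw [h2, Finset.sum_range_succ, Finset.sum_range_succ,
        Finset.sum_range_succ (fun j => g (2 * j) + g (2 * j + 1)) n, ih]
      ring

lemma logProd_eq (s a N : ℕ) (hsa : s ≤ a) (haN : a + s ≤ N) :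
    Real.log (∏ j ∈ Finset.range s,
      ((Nat.factorial j : ℝ) * (Nat.factorial (j + (a - s)) : ℝ) *
          (Nat.factorial (j + (a - s) + (N - a)) : ℝ)) /
        ((Nat.factorial ((N - a) - j - 1) : ℝ) * (Nat.factorial (2 * j + (a - s)) : ℝ) *
          (Nat.factorial (2 * j + (a - s) + 1) : ℝ)))
    = LF s + LF a + LF N + LF (N - a - s) - LF (N - s) - LF (N - a) - LF (a + s) := by
  have fpos : ∀ k : ℕ, (0:ℝ) < (Nat.factorial k : ℝ) := fun k => by
    exact_mod_cast Nat.factorial_pos k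
  set f : ℕ → ℝ := fun k => Real.log (Nat.factorial k) with hf
  have hlog : Real.log (∏ j ∈ Finset.range s,
      ((Nat.factorial j : ℝ) * (Nat.factorial (j + (a - s)) : ℝ) *
          (Nat.factorial (j + (a - s) + (N - a)) : ℝ)) /
        ((Nat.factorial ((N - a) - j - 1) : ℝ) * (Nat.factorial (2 * j + (a - s)) : ℝ) *
          (Nat.factorial (2 * j + (a - s) + 1) : ℝ)))
      = ∑ j ∈ Finset.range s,
        (f j + f (j + (a - s)) + f (j + (a - s) + (N - a))
          - (f ((N - a) - j - 1) + f (2 * j + (a - s)) + f (2 * j + (a - s) + 1))) := by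
    rw [Real.log_prod]
    · refine Finset.sum_congr rfl fun j _ => ?_
      rw [Real.log_div (by positivity) (by positivity), Real.log_mul (by positivity) (by positivity),
        Real.log_mul (by positivity) (by positivity), Real.log_mul (by positivity) (by positivity),
        Real.log_mul (by positivity) (by positivity)]
    · intro j _
      positivity
  rw [hlog]
  have S2 : ∑ j ∈ Finset.range s, f (j + (a - s)) = LF a - LF (a - s) := by
    have : ∑ j ∈ Finset.range s, f (j + (a - s)) = ∑ j ∈ Finset.range s, f ((a - s) + j) := by
      refine Finset.sum_congr rfl fun j _ => by rw [Nat.add_comm]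
    rw [this]
    have := Finset.sum_range_add f (a - s) s
    have ha : a - s + s = a := by omega
    rw [ha] at this
    rw [LF, LF, this]; ring
  have S3 : ∑ j ∈ Finset.range s, f (j + (a - s) + (N - a)) = LF N - LF (N - s) := by
    have : ∑ j ∈ Finset.range s, f (j + (a - s) + (N - a)) = ∑ j ∈ Finset.range s, f ((N - s) + j) := by
      refine Finset.sum_congr rfl fun j _ => by congr 1; omega
    rw [this]
    have := Finset.sum_range_add f (N - s) s
    have ha : N - s + s = N := by omega
    rw [ha] at this
    rw [LF, LF, this]; ring
  have S4 : ∑ j ∈ Finset.range s, f ((N - a) - j - 1) = LF (N - a) - LF (N - a - s) := by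
    have h1 : ∑ j ∈ Finset.range s, f ((N - a) - j - 1)
        = ∑ j ∈ Finset.range s, f ((N - a - s) + (s - 1 - j)) := by
      refine Finset.sum_congr rfl fun j hj => ?_
      rw [Finset.mem_range] at hj
      congr 1; omega
    rw [h1, Finset.sum_range_reflect (fun i => f ((N - a - s) + i)) s]
    have := Finset.sum_range_add f (N - a - s) s
    have ha : N - a - s + s = N - a := by omega
    rw [ha] at this
    rw [LF, LF, this]; ring
  have S56 : ∑ j ∈ Finset.range s, (f (2 * j + (a - s)) + f (2 * j + (a - s) + 1))
      = LF (a + s) - LF (a - s) := by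
    have h1 : ∑ j ∈ Finset.range s, (f (2 * j + (a - s)) + f (2 * j + (a - s) + 1))
        = ∑ k ∈ Finset.range (2 * s), f ((a - s) + k) := by
      rw [pair_sum (fun k => f ((a - s) + k)) s]
      refine Finset.sum_congr rfl fun j _ => ?_
      congr 2 <;> omega
    rw [h1]
    have := Finset.sum_range_add f (a - s) (2 * s)
    have ha : a - s + 2 * s = a + s := by omega
    rw [ha] at this
    rw [LF, LF, this]; ring
  have expand : ∑ j ∈ Finset.range s,
        (f j + f (j + (a - s)) + f (j + (a - s) + (N - a))
          - (f ((N - a) - j - 1) + f (2 * j + (a - s)) + f (2 * j + (a - s) + 1)))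
      = (∑ j ∈ Finset.range s, f j) + (∑ j ∈ Finset.range s, f (j + (a - s)))
        + (∑ j ∈ Finset.range s, f (j + (a - s) + (N - a)))
        - (∑ j ∈ Finset.range s, f ((N - a) - j - 1))
        - (∑ j ∈ Finset.range s, (f (2 * j + (a - s)) + f (2 * j + (a - s) + 1))) := by
    simp only [Finset.sum_sub_distrib, Finset.sum_add_distrib]
    ring
  rw [expand, S2, S3, S4, S56]
  have : ∑ j ∈ Finset.range s, f j = LF s := rfl
  rw [this]; ring


/-- Stirling-type asymptotics: for `0 < y ≤ x`, `x + y < 1`, with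
`s_N = ⌊yN⌋`, `q_N = ⌊xN⌋ − ⌊yN⌋`, `r_N = N − ⌊xN⌋`, the limit
`lim_{N→∞} −(1/N²) log ∏_{j=0}^{s_N−1} j!(j+q_N)!(j+q_N+r_N)! /
((r_N−j−1)!(2j+q_N)!(2j+q_N+1)!)` exists and equals
`ψ(x,y) = ((x+y)²/2)log(x+y) − ((1−x−y)²/2)log(1−x−y) − (x²/2)log x
+ ((1−x)²/2)log(1−x) − (y²/2)log y + ((1−y)²/2)log(1−y)`. -/
theorem psi_limit (x y : ℝ) (hy : 0 < y) (hyx : y ≤ x) (hxy : x + y < 1) :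
    Tendsto
      (fun N : ℕ =>
        -(1 / (N : ℝ) ^ 2) *
          Real.log (∏ j ∈ Finset.range (Nat.floor (y * N)),
            ((Nat.factorial j : ℝ) *
                (Nat.factorial (j + (Nat.floor (x * N) - Nat.floor (y * N))) : ℝ) *
                (Nat.factorial (j + (Nat.floor (x * N) - Nat.floor (y * N)) +
                  (N - Nat.floor (x * N))) : ℝ)) /
              ((Nat.factorial ((N - Nat.floor (x * N)) - j - 1) : ℝ) *
                (Nat.factorial (2 * j + (Nat.floor (x * N) - Nat.floor (y * N))) : ℝ) *
                (Nat.factorial (2 * j + (Nat.floor (x * N) - Nat.floor (y * N)) + 1) : ℝ))))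
      atTop
      (nhds ((x + y) ^ 2 / 2 * Real.log (x + y)
        - (1 - x - y) ^ 2 / 2 * Real.log (1 - x - y)
        - x ^ 2 / 2 * Real.log x
        + (1 - x) ^ 2 / 2 * Real.log (1 - x)
        - y ^ 2 / 2 * Real.log y
        + (1 - y) ^ 2 / 2 * Real.log (1 - y))) := by
  have hx : 0 < x := lt_of_lt_of_le hy hyx
  have hx1 : x < 1 := by linarith
  have hy1 : y < 1 := by linarith
  have hxy0 : 0 < x + y := by linarith
  have h1xy : 0 < 1 - x - y := by linarith
  set s : ℕ → ℕ := fun N => Nat.floor (y * N) with hs_def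
  set a : ℕ → ℕ := fun N => Nat.floor (x * N) with ha_def
  have hsa : ∀ N, s N ≤ a N := fun N =>
    Nat.floor_le_floor (by nlinarith [Nat.cast_nonneg (α := ℝ) N] :
      y * (N:ℝ) ≤ x * (N:ℝ))
  have haN : ∀ N, a N + s N ≤ N := by
    intro N
    have h1 : (a N : ℝ) ≤ x * N := Nat.floor_le (by positivity)
    have h2 : (s N : ℝ) ≤ y * N := Nat.floor_le (by positivity)
    have : ((a N + s N : ℕ) : ℝ) ≤ (N:ℝ) := by
      push_cast
      nlinarith [Nat.cast_nonneg (α := ℝ) N]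
    exact_mod_cast this
  -- ratio limits
  have hsr : Tendsto (fun N : ℕ => (s N : ℝ) / N) atTop (𝓝 y) :=
    (tendsto_nat_floor_mul_div_atTop hy.le).comp tendsto_natCast_atTop_atTop
  have har : Tendsto (fun N : ℕ => (a N : ℝ) / N) atTop (𝓝 x) :=
    (tendsto_nat_floor_mul_div_atTop hx.le).comp tendsto_natCast_atTop_atTop
  have hidr : Tendsto (fun N : ℕ => ((N:ℕ) : ℝ) / N) atTop (𝓝 1) := by
    apply tendsto_const_nhds.congr'
    filter_upwards [eventually_ge_atTop 1] with N hN
    have : (N:ℝ) ≠ 0 := by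
      have : (0:ℝ) < N := by exact_mod_cast hN
      positivity
    field_simp
  have hNsr : Tendsto (fun N : ℕ => ((N - s N : ℕ) : ℝ) / N) atTop (𝓝 (1 - y)) := by
    apply (tendsto_const_nhds.sub hsr).congr'
    filter_upwards [eventually_ge_atTop 1] with N hN
    have hN0 : (N:ℝ) ≠ 0 := by
      have : (0:ℝ) < N := by exact_mod_cast hN
      positivity
    rw [Nat.cast_sub (le_trans (Nat.le_add_left (s N) (a N)) (haN N))]
    field_simp
  have hNar : Tendsto (fun N : ℕ => ((N - a N : ℕ) : ℝ) / N) atTop (𝓝 (1 - x)) := by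
    apply (tendsto_const_nhds.sub har).congr'
    filter_upwards [eventually_ge_atTop 1] with N hN
    have hN0 : (N:ℝ) ≠ 0 := by
      have : (0:ℝ) < N := by exact_mod_cast hN
      positivity
    rw [Nat.cast_sub (le_trans (Nat.le_add_right (a N) (s N)) (haN N))]
    field_simp
  have hNasr : Tendsto (fun N : ℕ => ((N - a N - s N : ℕ) : ℝ) / N) atTop (𝓝 (1 - x - y)) := by
    apply ((tendsto_const_nhds.sub har).sub hsr).congr'
    filter_upwards [eventually_ge_atTop 1] with N hN
    have hN0 : (N:ℝ) ≠ 0 := by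
      have : (0:ℝ) < N := by exact_mod_cast hN
      positivity
    have h1 : N - a N - s N = N - (a N + s N) := by omega
    rw [h1, Nat.cast_sub (haN N)]
    push_cast
    field_simp
    ring
  have hasr : Tendsto (fun N : ℕ => ((a N + s N : ℕ) : ℝ) / N) atTop (𝓝 (x + y)) := by
    apply (har.add hsr).congr
    intro N
    push_cast
    rw [← add_div]
  -- seven applications of key_lim
  have hG1 := key_lim s y hy hsr
  have hG2 := key_lim a x hx har
  have hG3 := key_lim (fun N => N) 1 one_pos hidr
  have hG4 := key_lim (fun N => N - a N - s N) (1 - x - y) h1xy hNasr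
  have hG5 := key_lim (fun N => N - s N) (1 - y) (by linarith) hNsr
  have hG6 := key_lim (fun N => N - a N) (1 - x) (by linarith) hNar
  have hG7 := key_lim (fun N => a N + s N) (x + y) hxy0 hasr
  have hcomb := ((((((hG1.add hG2).add hG3).add hG4).sub hG5).sub hG6).sub hG7).neg
  have hval : -((y^2/2 * Real.log y - 3*y^2/4 + (x^2/2 * Real.log x - 3*x^2/4)
        + ((1:ℝ)^2/2 * Real.log 1 - 3*(1:ℝ)^2/4)
        + ((1-x-y)^2/2 * Real.log (1-x-y) - 3*(1-x-y)^2/4)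
        - ((1-y)^2/2 * Real.log (1-y) - 3*(1-y)^2/4)
        - ((1-x)^2/2 * Real.log (1-x) - 3*(1-x)^2/4)
        - ((x+y)^2/2 * Real.log (x+y) - 3*(x+y)^2/4)))
      = ((x + y) ^ 2 / 2 * Real.log (x + y)
        - (1 - x - y) ^ 2 / 2 * Real.log (1 - x - y)
        - x ^ 2 / 2 * Real.log x
        + (1 - x) ^ 2 / 2 * Real.log (1 - x)
        - y ^ 2 / 2 * Real.log y
        + (1 - y) ^ 2 / 2 * Real.log (1 - y)) := by
    rw [Real.log_one]; ring
  rw [← hval]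
  apply hcomb.congr'
  filter_upwards [eventually_ge_atTop 1] with N hN
  have hN0 : (N:ℝ) ≠ 0 := by
    have : (0:ℝ) < N := by exact_mod_cast hN
    positivity
  rw [logProd_eq (s N) (a N) N (hsa N) (haN N)]
  have hc1 : ((N - s N : ℕ) : ℝ) = (N:ℝ) - s N :=
    Nat.cast_sub (le_trans (Nat.le_add_left (s N) (a N)) (haN N))
  have hc2 : ((N - a N : ℕ) : ℝ) = (N:ℝ) - a N :=
    Nat.cast_sub (le_trans (Nat.le_add_right (a N) (s N)) (haN N))
  have hc3 : ((N - a N - s N : ℕ) : ℝ) = (N:ℝ) - a N - s N := by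
    have h1 : N - a N - s N = N - (a N + s N) := by omega
    rw [h1, Nat.cast_sub (haN N)]
    push_cast; ring
  have hc4 : ((a N + s N : ℕ) : ℝ) = (a N : ℝ) + s N := by push_cast; ring
  rw [hc1, hc2, hc3, hc4]
  field_simp
  ring
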